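/- Under the same assumptions, with the a-priori parameter choice α(δ) = δ/‖v‖ (for v ≠ 0), the symmetric Bregman distance satisfies D^symm(u_{α(δ)}, u†) ≤ ‖v‖ δ, i.e., the convergence rate is O(δ). -/
import Mathlib


open RealInnerProductSpace

noncomputable section

variable {Z : Type*} [NormedAddCommGroup Z] [InnerProductSpace ℝ Z] [CompleteSpace Z]

/-- Convex subdifferential of an extended-real-valued functional. -/
def Subdiff (J : Z → EReal) (u : Z) : Set Z :=
  {p | ∀ w, J u + ((⟪p, w - u⟫ : ℝ) : EReal) ≤ J w}

/-- Proper: not identically +∞ and nowhere -∞. -/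
def ProperE (J : Z → EReal) : Prop := (∃ u, J u ≠ ⊤) ∧ ∀ u, J u ≠ ⊥

/-- Convexity for extended-real-valued functionals. -/
def EConvexOn (J : Z → EReal) : Prop :=
  ∀ u v : Z, ∀ a b : ℝ, 0 ≤ a → 0 ≤ b → a + b = 1 →
    J (a • u + b • v) ≤ (a : EReal) * J u + (b : EReal) * J v

/-- u is a proximal point of J at z: it minimises w ↦ ½‖w - z‖² + J w. -/
def IsProx (J : Z → EReal) (z u : Z) : Prop :=
  ∀ w, ((1/2 * ‖u - z‖^2 : ℝ) : EReal) + J u ≤ ((1/2 * ‖w - z‖^2 : ℝ) : EReal) + J w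

variable {Y : Type*} [NormedAddCommGroup Y] [InnerProductSpace ℝ Y] [CompleteSpace Y]

/-- With the a-priori choice α(δ) = δ/‖v‖ the symmetric Bregman distance
satisfies D^symm(u_α, u†) ≤ ‖v‖δ, i.e. the convergence rate is O(δ). -/
theorem convergence_rate (K : Z →L[ℝ] Y) (J : Z → EReal)
    (hproper : ProperE J) (hconv : EConvexOn J) (hlsc : LowerSemicontinuous J)
    (udag ualpha : Z) (f fdelta : Y) (v : Y) (palpha : Z) (alpha delta : ℝ)
    (hdelta : 0 < delta) (hv : v ≠ 0) (halpha : alpha = delta / ‖v‖)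
    (hf : f = K udag) (hnoise : ‖f - fdelta‖ ≤ delta)
    (hpalpha : palpha ∈ Subdiff J ualpha)
    (hopt : (ContinuousLinearMap.adjoint K) (K ualpha - fdelta) + alpha • palpha = 0)
    (hsc : (ContinuousLinearMap.adjoint K) v ∈ Subdiff J udag) :
    ⟪ualpha - udag, palpha - (ContinuousLinearMap.adjoint K) v⟫ ≤ ‖v‖ * delta := by
  have hvn : (0:ℝ) < ‖v‖ := norm_pos_iff.mpr hv
  have hα : 0 < alpha := by rw [halpha]; positivity
  set A := ContinuousLinearMap.adjoint K with hA
  set d : Y := K ualpha - f with hd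
  have hαv : alpha * ‖v‖ = delta := by
    rw [halpha]; field_simp
  have h1 : alpha • palpha = -(A (K ualpha - fdelta)) := by
    have h := hopt
    have : A (K ualpha - fdelta) = -(alpha • palpha) := by
      rw [eq_neg_iff_add_eq_zero]; exact h
    rw [this, neg_neg]
  have key : alpha * ⟪ualpha - udag, palpha - A v⟫
      = -⟪d, d + ((f - fdelta) + alpha • v)⟫ := by
    have hsum : -(A (K ualpha - fdelta)) - A (alpha • v)
        = -(A ((K ualpha - fdelta) + alpha • v)) := by
      rw [map_add]; abel
    calc alpha * ⟪ualpha - udag, palpha - A v⟫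
        = ⟪ualpha - udag, alpha • palpha - alpha • (A v)⟫ := by
          rw [← smul_sub, real_inner_smul_right]
      _ = ⟪ualpha - udag, -(A ((K ualpha - fdelta) + alpha • v))⟫ := by
          rw [h1, ← map_smul, hsum]
      _ = -⟪ualpha - udag, A ((K ualpha - fdelta) + alpha • v)⟫ := by
          rw [inner_neg_right]
      _ = -⟪K (ualpha - udag), (K ualpha - fdelta) + alpha • v⟫ := by
          rw [hA, ContinuousLinearMap.adjoint_inner_right]
      _ = -⟪d, (K ualpha - fdelta) + alpha • v⟫ := by
          rw [map_sub, hd, hf]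
      _ = -⟪d, d + ((f - fdelta) + alpha • v)⟫ := by
          congr 1
          rw [hd]
          congr 1
          abel
  -- norm bound for the perturbation
  have hw : ‖(f - fdelta) + alpha • v‖ ≤ 2 * delta := by
    calc ‖(f - fdelta) + alpha • v‖ ≤ ‖f - fdelta‖ + ‖alpha • v‖ := norm_add_le _ _
      _ ≤ delta + alpha * ‖v‖ := by
          rw [norm_smul, Real.norm_eq_abs, abs_of_pos hα]
          linarith
      _ = 2 * delta := by rw [hαv]; ring
  have hinner : -⟪d, (f - fdelta) + alpha • v⟫ ≤ ‖d‖ * (2 * delta) := by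
    have h2 := abs_real_inner_le_norm d ((f - fdelta) + alpha • v)
    have h3 : ‖d‖ * ‖(f - fdelta) + alpha • v‖ ≤ ‖d‖ * (2 * delta) :=
      mul_le_mul_of_nonneg_left hw (norm_nonneg _)
    have := neg_abs_le (⟪d, (f - fdelta) + alpha • v⟫ : ℝ)
    nlinarith
  have hkey2 : alpha * ⟪ualpha - udag, palpha - A v⟫ ≤ delta ^ 2 := by
    rw [key, inner_add_right, real_inner_self_eq_norm_sq, neg_add]
    nlinarith [sq_nonneg (‖d‖ - delta)]
  have hfin : delta ^ 2 = alpha * (‖v‖ * delta) := by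
    rw [← hαv]; ring
  rw [hfin] at hkey2
  exact le_of_mul_le_mul_left hkey2 hα
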